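/- Let R = GF(2)[c]/(c³) and S = R[[d]]. For all natural numbers u ≥ 2 and v ≥ 0, setting i = 2^u(2v+1), the element (1 + c)³·(1 + c + c² + d) is a unit in S and the coefficient of c² in the d^i coefficient of d^{2^u(v+1)}·(1 + c + c² + d)^{2^u(v+1)}·((1 + c)³·(1 + c + c² + d))^{-1} ∈ S equals 1. -/

import Mathlib

open Polynomial PowerSeries

noncomputable section

/-- The ring `R = GF(2)[c] / (c³)`. -/
abbrev R2 : Type := AdjoinRoot (Polynomial.X ^ 3 : Polynomial (ZMod 2))

/-- The class of the variable `c` in `R = GF(2)[c] / (c³)`. -/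
def cR : R2 := AdjoinRoot.root _

/-- The power series ring `S = R[[d]]`. -/
abbrev S2 : Type := PowerSeries R2

/-- The image of `c` in `S = R[[d]]`. -/
def cS : S2 := PowerSeries.C (R := R2) cR

/-- The variable `d` of `S = R[[d]]`. -/
def dS : S2 := PowerSeries.X

/-- The coefficient of `c²` of an element of `R = GF(2)[c] / (c³)`,
computed via the unique representative polynomial of degree `< 3`. -/
def coefc2 (x : R2) : ZMod 2 :=
  (AdjoinRoot.modByMonicHom (Polynomial.monic_X_pow 3) x).coeff 2

lemma hc3 : cR ^ 3 = 0 := by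
  have := AdjoinRoot.eval₂_root (Polynomial.X ^ 3 : Polynomial (ZMod 2))
  simpa [cR] using this

lemma h2R : (2 : R2) = 0 := by
  have h : ((2:ℕ) : R2) = (algebraMap (ZMod 2) R2) ((2:ℕ) : ZMod 2) := (map_natCast _ 2).symm
  have h2 : ((2:ℕ) : ZMod 2) = 0 := by decide
  rw [h2, map_zero] at h
  simpa using h

lemma hA : (1 + cR) ^ 3 = 1 + cR + cR ^ 2 := by
  linear_combination hc3 + (cR + cR ^ 2) * h2R

lemma hc4 : (1 + cR) ^ 4 = 1 := by
  linear_combination (4 + cR) * hc3 + (2 * cR + 3 * cR ^ 2) * h2R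

lemma unitR : IsUnit ((1 + cR) ^ 3 * (1 + cR + cR ^ 2)) := by
  apply IsUnit.of_mul_eq_one ((1 + cR) ^ 2)
  rw [← hA]
  calc (1+cR)^3 * (1+cR)^3 * (1+cR)^2 = ((1+cR)^4)^2 := by ring
  _ = 1 := by rw [hc4]; ring

lemma coefc2_val : coefc2 (1 + cR ^ 2) = 1 := by
  have h1 : (1 + cR ^ 2 : R2) = AdjoinRoot.mk _ (1 + Polynomial.X ^ 2) := by
    simp [cR, map_add, map_one, map_pow, AdjoinRoot.mk_X]
  rw [coefc2, h1, AdjoinRoot.modByMonicHom_mk]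
  have hd : (1 + Polynomial.X ^ 2 : Polynomial (ZMod 2)) %ₘ Polynomial.X ^ 3
      = 1 + Polynomial.X ^ 2 := by
    rw [Polynomial.modByMonic_eq_self_iff (Polynomial.monic_X_pow 3)]
    rw [Polynomial.degree_X_pow]
    apply lt_of_le_of_lt (Polynomial.degree_add_le _ _)
    simp
    decide
  rw [hd]
  simp [Polynomial.coeff_one]

lemma choose_odd : ∀ u v : ℕ, Nat.choose (2^u * v + (2^u - 1)) (2^u * v) % 2 = 1 := by
  intro u
  induction u with
  | zero => intro v; simp
  | succ u ih =>
    intro v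
    have h := @Choose.choose_modEq_choose_mod_mul_choose_div_nat
      (2^(u+1) * v + (2^(u+1) - 1)) (2^(u+1) * v) 2 ⟨Nat.prime_two⟩
    have hp : 2^(u+1) = 2 * 2^u := by ring
    rw [hp] at h
    simp only [mul_assoc] at h ⊢
    have t1 : 1 ≤ 2^u := Nat.one_le_two_pow
    set t := 2^u with ht
    set s := t * v with hs
    have e1 : (2 * s + (2 * t - 1)) % 2 = 1 := by omega
    have e2 : (2 * s + (2 * t - 1)) / 2 = s + (t - 1) := by omega
    have e3 : (2 * s) % 2 = 0 := by omega
    have e4 : (2 * s) / 2 = s := by omega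
    rw [Nat.ModEq, e1, e2, e3, e4] at h
    rw [hp]
    simp only [mul_assoc]
    show (2 * s + (2 * t - 1)).choose (2 * s) % 2 = 1
    rw [h]
    simp [Nat.mul_mod, ih v]
    exact ih v

theorem unit_and_coefc2_case_iii (u v : ℕ) (hu : 2 ≤ u) :
    IsUnit ((1 + cS) ^ 3 * (1 + cS + cS ^ 2 + dS)) ∧
      coefc2 (PowerSeries.coeff (R := R2) (2 ^ u * (2 * v + 1))
          (dS ^ (2 ^ u * (v + 1)) * (1 + cS + cS ^ 2 + dS) ^ (2 ^ u * (v + 1)) *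
            Ring.inverse ((1 + cS) ^ 3 * (1 + cS + cS ^ 2 + dS)))) = 1 := by
  have hU : IsUnit ((1 + cS) ^ 3 * (1 + cS + cS ^ 2 + dS)) := by
    rw [PowerSeries.isUnit_iff_constantCoeff]
    simp only [cS, dS, map_mul, map_pow, map_add, map_one, PowerSeries.constantCoeff_C,
      PowerSeries.constantCoeff_X, add_zero]
    exact unitR
  refine ⟨hU, ?_⟩
  set m : ℕ := 2 ^ u * (v + 1) with hmdef
  set B : S2 := 1 + cS + cS ^ 2 + dS with hBdef
  have hm : 2 ^ u * v + 2 ^ u = m := by rw [hmdef]; ring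
  have ht1 : 1 ≤ 2 ^ u := Nat.one_le_two_pow
  have hm1 : 1 ≤ m := by omega
  have hcS3 : (1 + cS) ^ 3 = PowerSeries.C (R := R2) ((1 + cR) ^ 3) := by
    rw [cS, ← map_one (PowerSeries.C (R := R2)), ← map_add, ← map_pow]
  have h4S : (1 + cS) ^ 3 * PowerSeries.C (R := R2) (1 + cR) = 1 := by
    rw [hcS3, ← map_mul, ← pow_succ, hc4, map_one]
  have key : dS ^ m * B ^ m * Ring.inverse ((1 + cS) ^ 3 * B)
      = dS ^ m * (B ^ (m - 1) * PowerSeries.C (R := R2) (1 + cR)) := by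
    apply hU.mul_left_cancel
    have hBm : B ^ (m - 1) * B = B ^ m := by
      rw [← pow_succ]; congr 1; omega
    calc (1 + cS) ^ 3 * B * (dS ^ m * B ^ m * Ring.inverse ((1 + cS) ^ 3 * B))
        = dS ^ m * B ^ m * (Ring.inverse ((1 + cS) ^ 3 * B) * ((1 + cS) ^ 3 * B)) := by ring
      _ = dS ^ m * B ^ m := by rw [Ring.inverse_mul_cancel _ hU, mul_one]
      _ = dS ^ m * (B ^ (m - 1) * B) * ((1 + cS) ^ 3 * PowerSeries.C (R := R2) (1 + cR)) := by
          rw [hBm, h4S, mul_one]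
      _ = (1 + cS) ^ 3 * B * (dS ^ m * (B ^ (m - 1) * PowerSeries.C (R := R2) (1 + cR))) := by ring
  rw [key]
  have hi : 2 ^ u * (2 * v + 1) = 2 ^ u * v + m := by rw [hmdef]; ring
  rw [hi]
  have hX : dS ^ m * (B ^ (m - 1) * PowerSeries.C (R := R2) (1 + cR))
      = PowerSeries.X ^ m * (B ^ (m - 1) * PowerSeries.C (R := R2) (1 + cR)) := by rw [dS]
  rw [hX, PowerSeries.coeff_X_pow_mul, PowerSeries.coeff_mul_C]
  set A : R2 := 1 + cR + cR ^ 2 with hAdef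
  have hBpoly : B = ((Polynomial.X + Polynomial.C A : Polynomial R2) : S2) := by
    rw [hBdef, hAdef]
    simp only [cS, dS, Polynomial.coe_add, Polynomial.coe_X, Polynomial.coe_C, map_add,
      map_one, map_pow, Polynomial.coe_one, Polynomial.coe_pow]
    ring
  rw [hBpoly, ← Polynomial.coe_pow, Polynomial.coeff_coe, Polynomial.coeff_X_add_C_pow]
  have hexp : m - 1 - 2 ^ u * v = 2 ^ u - 1 := by omega
  have hch : (((m - 1).choose (2 ^ u * v) : ℕ) : R2) = 1 := by
    have hmm : m - 1 = 2 ^ u * v + (2 ^ u - 1) := by omega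
    have hodd := choose_odd u v
    rw [← hmm] at hodd
    obtain ⟨q, hq⟩ : ∃ q, (m - 1).choose (2 ^ u * v) = 2 * q + 1 :=
      ⟨(m - 1).choose (2 ^ u * v) / 2, by omega⟩
    rw [hq]; push_cast; rw [h2R]; ring
  rw [hexp, hch, mul_one]
  have hval : A ^ (2 ^ u - 1) * (1 + cR) = 1 + cR ^ 2 := by
    obtain ⟨w, rfl⟩ : ∃ w, u = w + 2 := ⟨u - 2, by omega⟩
    have ht : 1 ≤ 2 ^ w := Nat.one_le_two_pow
    have hexp2 : 3 * (2 ^ (w + 2) - 1) + 1 = 4 * (3 * 2 ^ w - 1) + 2 := by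
      have h4 : 2 ^ (w + 2) = 4 * 2 ^ w := by ring
      omega
    calc A ^ (2 ^ (w + 2) - 1) * (1 + cR)
        = (1 + cR) ^ (3 * (2 ^ (w + 2) - 1) + 1) := by
          rw [hAdef, ← hA, ← pow_mul, ← pow_succ]
      _ = ((1 + cR) ^ 4) ^ (3 * 2 ^ w - 1) * (1 + cR) ^ 2 := by
          rw [hexp2, pow_add, pow_mul]
      _ = (1 + cR) ^ 2 := by rw [hc4, one_pow, one_mul]
      _ = 1 + cR ^ 2 := by linear_combination cR * h2R
  rw [hval, coefc2_val]

end
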